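/- Let d : (0,∞) → (−∞,0] be a nonincreasing function such that the function f(ℓ) := d(ℓ)/ℓ² is bounded on (0,∞). Suppose there exist constants C > 0 and ℓ₀ > 0 such that f(nℓ) ≥ f(ℓ) − C/ℓ for all positive integers n and all ℓ ≥ ℓ₀. Then f(ℓ) converges to a finite limit A as ℓ → ∞, and moreover f(ℓ) ≤ A + 2C/ℓ for all ℓ ≥ 2ℓ₀. -/

import Mathlib

open Filter Set

private lemma stmt_1_aux (y q A ε M l L : ℝ) (hyA : A - ε/2 ≤ y) (hyM : -M ≤ y)
    (hq1 : 1 ≤ q) (hq : q ≤ 1 + 3*l/L) (hML : M*(3*l/L) ≤ ε/2) (hM0 : 0 ≤ M) :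
    A - ε ≤ y * q := by
  have h1 : -M * (q - 1) ≤ y * (q - 1) :=
    mul_le_mul_of_nonneg_right hyM (by linarith)
  have h2 : M * (q - 1) ≤ M * (3 * l / L) :=
    mul_le_mul_of_nonneg_left (by linarith) hM0
  nlinarith

/-- Lemma 2.2(2): abstract subadditivity lemma with error `C/ℓ`. -/
theorem stmt_1 (d : ℝ → ℝ)
    (hmono : AntitoneOn d (Ioi 0))
    (hneg : ∀ ℓ ∈ Ioi (0:ℝ), d ℓ ≤ 0)
    (hbdd : ∃ M : ℝ, ∀ ℓ ∈ Ioi (0:ℝ), |d ℓ / ℓ ^ 2| ≤ M)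
    (C ℓ₀ : ℝ) (hC : 0 < C) (hℓ₀ : 0 < ℓ₀)
    (hyp : ∀ n : ℕ, 0 < n → ∀ ℓ : ℝ, ℓ₀ ≤ ℓ →
      d ((n : ℝ) * ℓ) / ((n : ℝ) * ℓ) ^ 2 ≥ d ℓ / ℓ ^ 2 - C / ℓ) :
    ∃ A : ℝ,
      Tendsto (fun ℓ : ℝ => d ℓ / ℓ ^ 2) atTop (nhds A) ∧
      ∀ ℓ : ℝ, 2 * ℓ₀ ≤ ℓ → d ℓ / ℓ ^ 2 ≤ A + 2 * C / ℓ := by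
  obtain ⟨M, hM⟩ := hbdd
  have hM0 : 0 ≤ M := le_trans (abs_nonneg _) (hM ℓ₀ hℓ₀)
  set S : Set ℝ := (fun ℓ => d ℓ / ℓ ^ 2 - C / ℓ) '' (Ici ℓ₀) with hSdef
  have hSne : S.Nonempty := ⟨_, ⟨ℓ₀, self_mem_Ici, rfl⟩⟩
  have hSbdd : BddAbove S := by
    refine ⟨M, ?_⟩
    rintro x ⟨ℓ, hℓ, rfl⟩
    have hℓpos : (0:ℝ) < ℓ := lt_of_lt_of_le hℓ₀ hℓ
    have h1 := hM ℓ hℓpos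
    have h2 : 0 ≤ C / ℓ := by positivity
    have h3 : d ℓ / ℓ ^ 2 ≤ |d ℓ / ℓ ^ 2| := le_abs_self _
    simp only
    linarith
  set A : ℝ := sSup S with hAdef
  have hub : ∀ ℓ : ℝ, ℓ₀ ≤ ℓ → d ℓ / ℓ ^ 2 - C / ℓ ≤ A :=
    fun ℓ h => le_csSup hSbdd ⟨ℓ, h, rfl⟩
  -- key lower estimate
  have key : ∀ ε : ℝ, 0 < ε → ∃ N : ℝ, ∀ L : ℝ, N ≤ L → A - ε ≤ d L / L ^ 2 := by
    intro ε hε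
    obtain ⟨x, ⟨ℓ, hℓ, rfl⟩, hx⟩ :=
      exists_lt_of_lt_csSup hSne (show A - ε / 2 < A by linarith)
    have hℓpos : (0:ℝ) < ℓ := lt_of_lt_of_le hℓ₀ hℓ
    refine ⟨ℓ + 6 * (M + 1) * ℓ / ε, ?_⟩
    intro L hL
    have hLℓ : ℓ ≤ L := by
      have : 0 < 6 * (M + 1) * ℓ / ε := by positivity
      linarith
    have hLpos : (0:ℝ) < L := lt_of_lt_of_le hℓpos hLℓ
    have hLε : 6 * (M + 1) * ℓ / ε ≤ L := by
      linarith
    have hLε' : 6 * (M + 1) * ℓ ≤ L * ε := by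
      rw [div_le_iff₀ hε] at hLε
      linarith
    obtain ⟨m, hm1, hmL, hmU⟩ : ∃ m : ℕ, 1 ≤ m ∧ L ≤ (m:ℝ) * ℓ ∧ (m:ℝ) * ℓ ≤ L + ℓ := by
      refine ⟨⌈L / ℓ⌉₊, Nat.one_le_ceil_iff.mpr (by positivity), ?_, ?_⟩
      · have := Nat.le_ceil (L / ℓ)
        rw [div_le_iff₀ hℓpos] at this
        exact this
      · have h := Nat.ceil_lt_add_one (le_of_lt (show (0:ℝ) < L / ℓ by positivity))
        have h2 : (L / ℓ + 1) * ℓ = L + ℓ := by field_simp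
        nlinarith
    have hmlpos : (0:ℝ) < (m:ℝ) * ℓ := lt_of_lt_of_le hLpos hmL
    have hmono' : d ((m:ℝ) * ℓ) ≤ d L := hmono hLpos hmlpos hmL
    have hyA : A - ε / 2 ≤ d ((m:ℝ) * ℓ) / ((m:ℝ) * ℓ) ^ 2 :=
      le_trans (le_of_lt hx) (hyp m hm1 ℓ hℓ)
    have hyM : -M ≤ d ((m:ℝ) * ℓ) / ((m:ℝ) * ℓ) ^ 2 := (abs_le.mp (hM _ hmlpos)).1
    have hq1 : 1 ≤ ((m:ℝ) * ℓ) ^ 2 / L ^ 2 := by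
      rw [le_div_iff₀ (by positivity)]
      nlinarith
    have hq : ((m:ℝ) * ℓ) ^ 2 / L ^ 2 ≤ 1 + 3 * ℓ / L := by
      rw [div_le_iff₀ (by positivity)]
      have heq : (1 + 3 * ℓ / L) * L ^ 2 = L ^ 2 + 3 * ℓ * L := by
        field_simp
      rw [heq]
      nlinarith
    have hML : M * (3 * ℓ / L) ≤ ε / 2 := by
      rw [mul_div_assoc' M (3 * ℓ) L, div_le_iff₀ hLpos]
      nlinarith
    have hyq := stmt_1_aux _ _ A ε M ℓ L hyA hyM hq1 hq hML hM0
    have heq2 : d ((m:ℝ) * ℓ) / ((m:ℝ) * ℓ) ^ 2 * (((m:ℝ) * ℓ) ^ 2 / L ^ 2)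
        = d ((m:ℝ) * ℓ) / L ^ 2 := by
      field_simp
    have h3 : d ((m:ℝ) * ℓ) / L ^ 2 ≤ d L / L ^ 2 := by
      gcongr
    linarith [heq2 ▸ hyq, h3]
  refine ⟨A, ?_, ?_⟩
  · rw [Metric.tendsto_atTop]
    intro ε hε
    obtain ⟨N₁, hN₁⟩ := key (ε / 2) (by linarith)
    refine ⟨max N₁ (max ℓ₀ (2 * C / ε)), ?_⟩
    intro L hL
    have hL1 : N₁ ≤ L := le_trans (le_max_left _ _) hL
    have hL2 : ℓ₀ ≤ L := le_trans (le_trans (le_max_left _ _) (le_max_right _ _)) hL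
    have hL3 : 2 * C / ε ≤ L := le_trans (le_trans (le_max_right _ _) (le_max_right _ _)) hL
    have hLpos : (0:ℝ) < L := lt_of_lt_of_le hℓ₀ hL2
    have hlow := hN₁ L hL1
    have hup : d L / L ^ 2 ≤ A + C / L := by
      have := hub L hL2
      linarith
    have hCL : C / L ≤ ε / 2 := by
      rw [div_le_iff₀ hε] at hL3
      rw [div_le_div_iff₀ hLpos (by norm_num : (0:ℝ) < 2)]
      linarith
    rw [Real.dist_eq, abs_lt]
    constructor <;> linarith
  · intro ℓ hℓ
    have hℓ' : ℓ₀ ≤ ℓ := by linarith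
    have hℓpos : (0:ℝ) < ℓ := lt_of_lt_of_le hℓ₀ hℓ'
    have h1 := hub ℓ hℓ'
    have h2 : C / ℓ ≤ 2 * C / ℓ := by
      gcongr
      linarith
    linarith
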